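/- Characterization of dcat of a power: for m ≥ 1 and a path-connected metric space X, dcat(X^m) ≤ n if and only if the restriction C_{n+1}(ξ_m) : A_{n+1}(X) → X^m of the fibration B_{n+1}(ξ_m) to measures supported on paths starting at a fixed basepoint x_0 admits a continuous section. In particular, dcat(X) = dsecat(p_0) for the evaluation fibration p_0 : P_0(X) → X. -/

import Mathlib

open MeasureTheory unitInterval

noncomputable section

/-- The path space `P(X) = C([0,1], X)` with the compact-open topology. -/
abbrev PathSp (X : Type*) [TopologicalSpace X] : Type _ := C(unitInterval, X)

/-- The space `B_n(Z)` of probability measures on a metric space `Z` supported on at most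
`n` points, as a subspace of the space of probability measures with the Lévy–Prokhorov metric. -/
def Bmeas (n : ℕ) (Z : Type*) [MetricSpace Z] : Type _ :=
  letI : MeasurableSpace Z := borel Z
  {μ : LevyProkhorov (ProbabilityMeasure Z) //
    ∃ S : Finset Z, S.card ≤ n ∧ (LevyProkhorov.toMeasureEquiv μ : ProbabilityMeasure Z) (↑S : Set Z) = 1}

noncomputable instance (n : ℕ) (Z : Type*) [MetricSpace Z] : TopologicalSpace (Bmeas n Z) :=
  letI : MeasurableSpace Z := borel Z
  haveI : BorelSpace Z := ⟨rfl⟩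
  instTopologicalSpaceSubtype

/-- The underlying probability measure of an element of `B_n(Z)`. -/
def Bmeas.meas {n : ℕ} {Z : Type*} [MetricSpace Z] (μ : Bmeas n Z) :
    @ProbabilityMeasure Z (borel Z) :=
  LevyProkhorov.toMeasureEquiv μ.1

/-- `μ ∈ B_n(Z)` is supported on the set `A`. -/
def DistributedOn {Z : Type*} [MetricSpace Z] {n : ℕ} (μ : Bmeas n Z) (A : Set Z) : Prop :=
  ∃ S : Finset Z, (↑S : Set Z) ⊆ A ∧ Bmeas.meas μ (↑S : Set Z) = 1

/-- The time points `t_j = j/(m-1)`, `j = 0, …, m-1`, in `[0,1]`. -/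
def tpt (m : ℕ) (j : Fin m) : unitInterval :=
  Set.projIcc 0 1 zero_le_one ((j : ℝ) / ((m : ℝ) - 1))

/-- A `k`-distributed `m`-navigation algorithm on `X`. -/
def IsNavAlg (m k : ℕ) {X : Type*} [MetricSpace X]
    (s : (Fin m → X) → Bmeas k (PathSp X)) : Prop :=
  Continuous s ∧ ∀ x : Fin m → X,
    DistributedOn (s x) {φ : PathSp X | ∀ j : Fin m, φ (tpt m j) = x j}

/-- The `m`-th sequential distributional topological complexity. -/
noncomputable def dTC (m : ℕ) (X : Type*) [MetricSpace X] : ℕ∞ :=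
  sInf {c : ℕ∞ | ∃ k : ℕ, c = k ∧
    ∃ s : (Fin m → X) → Bmeas (k + 1) (PathSp X), IsNavAlg m (k + 1) s}

/-- A `k`-contraction of `Y` to the point `y₀`. -/
def IsContr (k : ℕ) {Y : Type*} [MetricSpace Y] (y₀ : Y)
    (H : Y → Bmeas k (PathSp Y)) : Prop :=
  Continuous H ∧ ∀ y : Y,
    DistributedOn (H y) {φ : PathSp Y | φ 0 = y ∧ φ 1 = y₀}

/-- The distributional Lusternik–Schnirelmann category. -/
noncomputable def dcat (Y : Type*) [MetricSpace Y] : ℕ∞ :=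
  sInf {c : ℕ∞ | ∃ k : ℕ, c = k ∧
    ∃ (y₀ : Y) (H : Y → Bmeas (k + 1) (PathSp Y)), IsContr (k + 1) y₀ H}

/-- The classical `m`-th sequential topological complexity. -/
noncomputable def TCcl (m : ℕ) (X : Type*) [TopologicalSpace X] : ℕ∞ :=
  sInf {c : ℕ∞ | ∃ k : ℕ, c = k ∧
    ∃ (U : Fin (k + 1) → Set (Fin m → X)) (s : ∀ i : Fin (k + 1), C(U i, PathSp X)),
      (∀ i, IsOpen (U i)) ∧ (∀ x, ∃ i, x ∈ U i) ∧
      ∀ (i : Fin (k + 1)) (x : U i) (j : Fin m), (s i x) (tpt m j) = (x : Fin m → X) j}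

/-- The homotopy lifting property with respect to all spaces (Hurewicz fibration). -/
def IsHurFib {E B : Type*} [TopologicalSpace E] [TopologicalSpace B] (p : E → B) : Prop :=
  ∀ (Z : Type) [TopologicalSpace Z] (f : C(Z, E)) (H : C(Z × unitInterval, B)),
    (∀ z, H (z, 0) = p (f z)) →
      ∃ G : C(Z × unitInterval, E),
        (∀ z t, p (G (z, t)) = H (z, t)) ∧ ∀ z, G (z, 0) = f z

/-- `E_k(p)`: the space of probability measures supported on at most `k` points of a
single fiber of `p`, as a subspace of `B_k(E)`. -/
def FibMeas (k : ℕ) {E B : Type*} [MetricSpace E] (p : E → B) : Type _ :=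
  {μ : Bmeas k E // ∃ b : B, DistributedOn μ (p ⁻¹' {b})}

instance (k : ℕ) {E B : Type*} [MetricSpace E] (p : E → B) :
    TopologicalSpace (FibMeas k p) := instTopologicalSpaceSubtype

/-- The map `B_k(p) : E_k(p) → B` sending a fiberwise supported measure to its base point. -/
noncomputable def fibProj (k : ℕ) {E B : Type*} [MetricSpace E] (p : E → B)
    (μ : FibMeas k p) : B :=
  Classical.choose μ.2

/-- The distributional sectional category of a map `p : E → B`. -/
noncomputable def dsecat {E B : Type*} [MetricSpace E] [MetricSpace B] (p : E → B) : ℕ∞ :=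
  sInf {c : ℕ∞ | ∃ k : ℕ, c = k ∧
    ∃ s : B → FibMeas (k + 1) p, Continuous s ∧ ∀ b, fibProj (k + 1) p (s b) = b}

/-- The fibration `π_m : P(X) → X^m`, `φ ↦ (φ(t_1), …, φ(t_m))`. -/
def piFib (m : ℕ) (X : Type*) [TopologicalSpace X] (φ : PathSp X) : Fin m → X :=
  fun j => φ (tpt m j)

/-- The fibration `ξ_m : P(X) → X^m`, `φ ↦ (φ(1/m), φ(2/m), …, φ(1))`. -/
def xiFib (m : ℕ) (X : Type*) [TopologicalSpace X] (φ : PathSp X) : Fin m → X :=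
  fun j => φ (Set.projIcc 0 1 zero_le_one (((j : ℝ) + 1) / (m : ℝ)))

/-- `A_{n+1}(X)`: the subspace of `P(X)_{n+1}(ξ_m)` of measures supported on paths
starting at the basepoint `x₀`. -/
def Asub (n m : ℕ) (X : Type*) [MetricSpace X] (x₀ : X) : Type _ :=
  {μ : FibMeas n (xiFib m X) // DistributedOn μ.1 {φ : PathSp X | φ 0 = x₀}}

instance (n m : ℕ) (X : Type*) [MetricSpace X] (x₀ : X) :
    TopologicalSpace (Asub n m X x₀) := instTopologicalSpaceSubtype

/-- The space `P_0(X)` of paths ending at `x₀`, with the evaluation-at-`0` fibration. -/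
def Pend (X : Type*) [MetricSpace X] (x₀ : X) : Type _ := {φ : PathSp X // φ 1 = x₀}

instance (X : Type*) [MetricSpace X] (x₀ : X) : MetricSpace (Pend X x₀) :=
  Subtype.metricSpace

/-- `p_0 : P_0(X) → X`, evaluation at time `0`. -/
def pZero (X : Type*) [MetricSpace X] (x₀ : X) (φ : Pend X x₀) : X := φ.1 0


/-! ### Auxiliary machinery for the proof -/
section Aux
open scoped ENNReal NNReal


section Core
variable {Z W : Type*} [MetricSpace Z] [MeasurableSpace Z] [BorelSpace Z]
  [MetricSpace W] [MeasurableSpace W] [BorelSpace W]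

variable {A : Set Z}

/-- push a measure supported on a closed set `A` forward along a map defined on `A`. -/
def pushMeas (f : A → W) (μ : Measure Z) : Measure W :=
  Measure.map f (Measure.comap Subtype.val μ)

lemma pushMeas_apply (hA : IsClosed A) {f : A → W} (hf : Continuous f) (μ : Measure Z) {B : Set W} (hB : MeasurableSet B) :
    pushMeas f μ B = μ (Subtype.val '' (f ⁻¹' B)) := by
  rw [pushMeas, Measure.map_apply hf.measurable hB,
    (MeasurableEmbedding.subtype_coe hA.measurableSet).comap_apply]

lemma pushMeas_isProb (hA : IsClosed A) {f : A → W} (hf : Continuous f) (μ : Measure Z) [IsProbabilityMeasure μ] (hμA : μ A = 1) :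
    IsProbabilityMeasure (pushMeas f μ) := by
  constructor
  rw [pushMeas_apply hA hf μ MeasurableSet.univ, Set.preimage_univ, Set.image_univ,
    Subtype.range_coe]
  exact hμA

lemma pushMeas_mono_aux (hA : IsClosed A) {f : A → W} (hf : Continuous f) (hlip : ∀ a b : A, dist (f a) (f b) ≤ dist a b)
    (μ ν : Measure Z) (hνA : ν A = 1) [IsProbabilityMeasure ν] {ε : ℝ≥0∞}
    (hlt : levyProkhorovEDist μ ν < ε) {B : Set W} (hB : MeasurableSet B) :
    pushMeas f μ B ≤ pushMeas f ν (Metric.thickening ε.toReal B) + ε := by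
  have hmbl : MeasurableSet (Subtype.val '' (f ⁻¹' B)) :=
    (MeasurableEmbedding.subtype_coe hA.measurableSet).measurableSet_image.2
      (hf.measurable hB)
  have hc : ν Aᶜ = 0 := (prob_compl_eq_zero_iff hA.measurableSet).2 hνA
  rw [pushMeas_apply hA hf _ hB,
    pushMeas_apply hA hf _ Metric.isOpen_thickening.measurableSet]
  calc μ (Subtype.val '' (f ⁻¹' B))
      ≤ ν (Metric.thickening ε.toReal (Subtype.val '' (f ⁻¹' B))) + ε :=
        left_measure_le_of_levyProkhorovEDist_lt hlt hmbl
    _ ≤ ν (Subtype.val '' (f ⁻¹' Metric.thickening ε.toReal B)) + ε := by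
        refine add_le_add_left ?_ ε
        set E := Metric.thickening ε.toReal (Subtype.val '' (f ⁻¹' B)) with hE
        have h1 : ν E ≤ ν (E ∩ A) + ν (E \ A) := measure_le_inter_add_diff ν E A
        have h2 : ν (E \ A) = 0 :=
          measure_mono_null (Set.diff_subset_iff.2 (by simp [Set.subset_union_of_subset_left,
            Set.compl_union_self] )) hc
        have h3 : E ∩ A ⊆ Subtype.val '' (f ⁻¹' Metric.thickening ε.toReal B) := by
          rintro z ⟨hzE, hzA⟩
          obtain ⟨c, hcmem, hdist⟩ := Metric.mem_thickening_iff.1 hzE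
          obtain ⟨a, ha, rfl⟩ := hcmem
          refine ⟨⟨z, hzA⟩, ?_, rfl⟩
          refine Metric.mem_thickening_iff.2 ⟨f a, ha, lt_of_le_of_lt (hlip ⟨z, hzA⟩ a) ?_⟩
          rwa [Subtype.dist_eq]
        calc ν E ≤ ν (E ∩ A) + ν (E \ A) := h1
          _ = ν (E ∩ A) := by rw [h2, add_zero]
          _ ≤ _ := measure_mono h3

lemma pushMeas_LPedist (hA : IsClosed A) {f : A → W} (hf : Continuous f) (hlip : ∀ a b : A, dist (f a) (f b) ≤ dist a b)
    (μ ν : Measure Z) [IsProbabilityMeasure μ] [IsProbabilityMeasure ν]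
    (hμA : μ A = 1) (hνA : ν A = 1) :
    levyProkhorovEDist (pushMeas f μ) (pushMeas f ν) ≤ levyProkhorovEDist μ ν := by
  apply levyProkhorovEDist_le_of_forall
  intro ε B hlt hεtop hB
  exact ⟨pushMeas_mono_aux hA hf hlip μ ν hνA hlt hB,
    pushMeas_mono_aux hA hf hlip ν μ hμA (by rwa [levyProkhorovEDist_comm]) hB⟩

end Core

section Wrapper
variable {Z W : Type*} [MetricSpace Z] [MeasurableSpace Z] [BorelSpace Z]
  [MetricSpace W] [MeasurableSpace W] [BorelSpace W] {A : Set Z}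

lemma pm_apply_eq_one_iff (P : ProbabilityMeasure Z) (s : Set Z) :
    P s = 1 ↔ P.toMeasure s = 1 := by
  rw [← ProbabilityMeasure.ennreal_coeFn_eq_coeFn_toMeasure]
  constructor
  · intro h; rw [h, ENNReal.coe_one]
  · intro h; exact_mod_cast h

/-- Push a Lévy–Prokhorov probability measure supported on a closed set `A`
forward along a short map defined on `A`. -/
def lpPushPM (hA : IsClosed A) (f : A → W) (hf : Continuous f)
    (μs : {μ : LevyProkhorov (ProbabilityMeasure Z) //
      (LevyProkhorov.toMeasureEquiv μ : ProbabilityMeasure Z).toMeasure A = 1}) :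
    LevyProkhorov (ProbabilityMeasure W) :=
  LevyProkhorov.toMeasureEquiv.symm
    ⟨pushMeas f (LevyProkhorov.toMeasureEquiv μs.1 : ProbabilityMeasure Z).toMeasure,
     pushMeas_isProb hA hf _ μs.2⟩

lemma lpPushPM_toMeasure (hA : IsClosed A) (f : A → W) (hf : Continuous f)
    (μs : {μ : LevyProkhorov (ProbabilityMeasure Z) //
      (LevyProkhorov.toMeasureEquiv μ : ProbabilityMeasure Z).toMeasure A = 1}) :
    (LevyProkhorov.toMeasureEquiv (lpPushPM hA f hf μs) : ProbabilityMeasure W).toMeasure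
      = pushMeas f (LevyProkhorov.toMeasureEquiv μs.1 : ProbabilityMeasure Z).toMeasure := rfl

lemma lpPushPM_lipschitz (hA : IsClosed A) (f : A → W) (hf : Continuous f)
    (hlip : ∀ a b : A, dist (f a) (f b) ≤ dist a b) :
    LipschitzWith 1 (lpPushPM hA f hf) := by
  apply LipschitzWith.of_dist_le_mul
  intro μs νs
  rw [NNReal.coe_one, one_mul, Subtype.dist_eq μs νs,
    LevyProkhorov.dist_probabilityMeasure_def, LevyProkhorov.dist_probabilityMeasure_def,
    levyProkhorovDist, levyProkhorovDist]
  haveI := pushMeas_isProb hA hf _ μs.2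
  haveI := pushMeas_isProb hA hf _ νs.2
  exact ENNReal.toReal_mono (levyProkhorovEDist_ne_top _ _)
    (pushMeas_LPedist hA hf hlip _ _ μs.2 νs.2)

lemma lpPushPM_continuous (hA : IsClosed A) (f : A → W) (hf : Continuous f)
    (hlip : ∀ a b : A, dist (f a) (f b) ≤ dist a b) :
    Continuous (lpPushPM hA f hf) :=
  (lpPushPM_lipschitz hA f hf hlip).continuous

lemma lpPushPM_distributed (hA : IsClosed A) (f : A → W) (hf : Continuous f)
    (μs : {μ : LevyProkhorov (ProbabilityMeasure Z) //
      (LevyProkhorov.toMeasureEquiv μ : ProbabilityMeasure Z).toMeasure A = 1})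
    {S : Finset Z} (hSA : (↑S : Set Z) ⊆ A)
    (hS1 : (LevyProkhorov.toMeasureEquiv μs.1 : ProbabilityMeasure Z).toMeasure ↑S = 1)
    {T : Set W} (hT : ∀ z (hz : z ∈ A), z ∈ S → f ⟨z, hz⟩ ∈ T) :
    ∃ Tf : Finset W, Tf.card ≤ S.card ∧ (↑Tf : Set W) ⊆ T ∧
      (LevyProkhorov.toMeasureEquiv (lpPushPM hA f hf μs) : ProbabilityMeasure W).toMeasure ↑Tf = 1 := by
  classical
  set Sf : Finset A := S.subtype (· ∈ A) with hSf
  refine ⟨Sf.image f, (Finset.card_image_le).trans ?_, ?_, ?_⟩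
  · rw [hSf, Finset.card_subtype]; exact Finset.card_filter_le _ _
  · intro w hw
    obtain ⟨a, haSf, rfl⟩ := Finset.mem_image.1 hw
    have haS : a.1 ∈ S := by simpa [hSf] using Finset.mem_subtype.1 haSf
    exact hT a.1 a.2 haS
  · haveI := pushMeas_isProb hA hf
      (LevyProkhorov.toMeasureEquiv μs.1 : ProbabilityMeasure Z).toMeasure μs.2
    refine le_antisymm prob_le_one ?_
    have hmbl : MeasurableSet (↑(Sf.image f) : Set W) :=
      ((Sf.image f).finite_toSet.isClosed).measurableSet
    rw [lpPushPM_toMeasure, pushMeas_apply hA hf _ hmbl]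
    calc (1 : ℝ≥0∞)
        = (LevyProkhorov.toMeasureEquiv μs.1 : ProbabilityMeasure Z).toMeasure ↑S := hS1.symm
      _ ≤ _ := by
          refine measure_mono ?_
          intro z hzS
          have hzA : z ∈ A := hSA hzS
          refine ⟨⟨z, hzA⟩, ?_, rfl⟩
          show f ⟨z, hzA⟩ ∈ (↑(Sf.image f) : Set W)
          exact Finset.mem_coe.2
            (Finset.mem_image.2 ⟨⟨z, hzA⟩, Finset.mem_subtype.2 hzS, rfl⟩)
end Wrapper

section Paths
variable {X : Type*} [MetricSpace X]

/-- binary concatenation of two maps `ℝ → X`. -/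
def gtrans (p q : ℝ → X) : ℝ → X := fun t => if t ≤ 1/2 then p (2*t) else q (2*t - 1)

lemma gtrans_of_le {p q : ℝ → X} {t : ℝ} (h : t ≤ 1/2) : gtrans p q t = p (2*t) :=
  if_pos h

lemma gtrans_of_not_le {p q : ℝ → X} {t : ℝ} (h : ¬ t ≤ 1/2) : gtrans p q t = q (2*t - 1) :=
  if_neg h

lemma gtrans_continuous {p q : ℝ → X} (hp : Continuous p) (hq : Continuous q)
    (hpq : p 1 = q 0) : Continuous (gtrans p q) := by
  apply Continuous.if_le (hp.comp (by fun_prop)) (hq.comp (by fun_prop))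
    continuous_id continuous_const
  intro t ht
  subst ht
  norm_num [hpq]

lemma gtrans_clampL {p q : ℝ → X} {a : X} (hp : ∀ t ≤ (0:ℝ), p t = a) :
    ∀ t ≤ (0:ℝ), gtrans p q t = a := by
  intro t ht
  rw [gtrans_of_le (by linarith)]
  exact hp _ (by linarith)

lemma gtrans_clampR {p q : ℝ → X} {a : X} (hq : ∀ t, (1:ℝ) ≤ t → q t = a) :
    ∀ t, (1:ℝ) ≤ t → gtrans p q t = a := by
  intro t ht
  rw [gtrans_of_not_le (by linarith)]
  exact hq _ (by linarith)

lemma gtrans_dist {p q p' q' : ℝ → X} {D : ℝ}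
    (hp : ∀ t, dist (p t) (p' t) ≤ D) (hq : ∀ t, dist (q t) (q' t) ≤ D) :
    ∀ t, dist (gtrans p q t) (gtrans p' q' t) ≤ D := by
  intro t
  by_cases h : t ≤ 1/2
  · rw [gtrans_of_le h, gtrans_of_le h]; exact hp _
  · rw [gtrans_of_not_le h, gtrans_of_not_le h]; exact hq _

/-- `n`-fold concatenation of a list of maps, anchored at `z`. -/
def btrans (z : X) : List (ℝ → X) → ℝ → X
  | [] => fun _ => z
  | p :: l => gtrans p (btrans z l)

/-- A "good" family: continuous and clamped to `z` on both sides. -/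
def GoodLoop (z : X) (p : ℝ → X) : Prop :=
  Continuous p ∧ (∀ t ≤ (0:ℝ), p t = z) ∧ (∀ t, (1:ℝ) ≤ t → p t = z)

lemma btrans_good {z : X} : ∀ (l : List (ℝ → X)), (∀ p ∈ l, GoodLoop z p) →
    GoodLoop z (btrans z l)
  | [], _ => ⟨continuous_const, fun _ _ => rfl, fun _ _ => rfl⟩
  | p :: l, h => by
    have hp := h p List.mem_cons_self
    have hl := btrans_good l (fun q hq => h q (List.mem_cons_of_mem p hq))
    refine ⟨gtrans_continuous hp.1 hl.1 ?_, gtrans_clampL hp.2.1, gtrans_clampR hl.2.2⟩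
    rw [hp.2.2 1 le_rfl, hl.2.1 0 le_rfl]

/-- tip time of the `i`-th loop. -/
def tipt (i : ℕ) : ℝ := 1 - (13/16) * (1/2)^i

lemma tipt_mem (i : ℕ) : 0 ≤ tipt i ∧ tipt i ≤ 1 := by
  unfold tipt
  constructor
  · have : (1/2:ℝ)^i ≤ 1 := pow_le_one₀ (by norm_num) (by norm_num)
    nlinarith
  · have : (0:ℝ) < (1/2)^i := by positivity
    nlinarith

lemma btrans_tip {z : X} : ∀ (l : List (ℝ → X)) (i : ℕ) (hi : i < l.length),
    btrans z l (tipt i) = l.get ⟨i, hi⟩ (3/8)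
  | p :: l, 0, _ => by
    rw [btrans, gtrans_of_le (by norm_num [tipt])]
    show p (2 * tipt 0) = p (3/8)
    norm_num [tipt]
  | p :: l, (i+1), hi => by
    have h2 : (1/2:ℝ)^(i+1) ≤ 1/2 := by
      rw [pow_succ]
      have : (1/2:ℝ)^i ≤ 1 := pow_le_one₀ (by norm_num) (by norm_num)
      nlinarith
    rw [btrans, gtrans_of_not_le (by unfold tipt; nlinarith)]
    have harg : 2 * tipt (i+1) - 1 = tipt i := by
      unfold tipt; rw [pow_succ]; ring
    rw [harg]
    exact btrans_tip l i (Nat.succ_lt_succ_iff.1 hi)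

lemma btrans_dist {z : X} {D : ℝ} (hD : 0 ≤ D) :
    ∀ (l l' : List (ℝ → X)) (_ : l.length = l'.length)
    (_ : ∀ (i : ℕ) (hi : i < l.length) (hi' : i < l'.length) (t : ℝ),
      dist (l.get ⟨i, hi⟩ t) (l'.get ⟨i, hi'⟩ t) ≤ D) (t : ℝ),
    dist (btrans z l t) (btrans z l' t) ≤ D
  | [], [], _, _, t => by simpa [btrans] using hD
  | p :: l, p' :: l', hlen, h, t => by
    rw [btrans, btrans]
    refine gtrans_dist (fun u => h 0 (by simp) (by simp) u) ?_ t
    intro u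
    exact btrans_dist hD l l' (Nat.succ_injective hlen)
      (fun i hi hi' v => h (i+1) (Nat.succ_lt_succ hi) (Nat.succ_lt_succ hi') v) u

end Paths

section PathConstr
variable {X : Type*} [MetricSpace X]

/-- clamped version of a continuous path. -/
def pcI (φ : C(unitInterval, X)) : ℝ → X := fun t => φ (Set.projIcc 0 1 zero_le_one t)

lemma pcI_continuous (φ : C(unitInterval, X)) : Continuous (pcI φ) :=
  (map_continuous φ).comp continuous_projIcc

lemma pcI_of_nonpos (φ : C(unitInterval, X)) {t : ℝ} (ht : t ≤ 0) : pcI φ t = φ 0 := by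
  unfold pcI
  rw [Set.projIcc_of_le_left _ ht]
  rfl

lemma pcI_of_one_le (φ : C(unitInterval, X)) {t : ℝ} (ht : 1 ≤ t) : pcI φ t = φ 1 := by
  unfold pcI
  rw [Set.projIcc_of_right_le _ ht]
  rfl

lemma pcI_dist (φ ψ : C(unitInterval, X)) (t : ℝ) :
    dist (pcI φ t) (pcI ψ t) ≤ dist φ ψ :=
  ContinuousMap.dist_apply_le_dist _

lemma nat_abs_ge_one {a b : ℕ} (h : a ≠ b) : (1:ℝ) ≤ |(a:ℝ) - (b:ℝ)| := by
  have h1 : (1:ℤ) ≤ |(a:ℤ) - (b:ℤ)| := Int.one_le_abs (sub_ne_zero.2 (by exact_mod_cast h))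
  have h2 : ((|(a:ℤ) - (b:ℤ)| : ℤ) : ℝ) = |(a:ℝ) - (b:ℝ)| := by push_cast; rfl
  calc (1:ℝ) = ((1:ℤ):ℝ) := by norm_num
    _ ≤ ((|(a:ℤ) - (b:ℤ)| : ℤ) : ℝ) := by exact_mod_cast h1
    _ = _ := h2

end PathConstr

section HFun

/-- piecewise-linear time reparametrization hitting `tipt j` at time `(j+1)/m`. -/
def hfun (m : ℕ) : ℝ → ℝ :=
  fun s => ∑ k : Fin m, tipt k * max 0 (1 - |(m:ℝ) * s - ((k:ℝ) + 1)|)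

lemma hfun_continuous (m : ℕ) : Continuous (hfun m) := by
  apply continuous_finset_sum
  intro k _
  exact continuous_const.mul (continuous_const.max (by fun_prop))

lemma hfun_zero (m : ℕ) : hfun m 0 = 0 := by
  apply Finset.sum_eq_zero
  intro k _
  have h1 : |(m:ℝ) * 0 - ((k:ℝ) + 1)| = (k:ℝ) + 1 := by
    rw [mul_zero, zero_sub, abs_neg, abs_of_nonneg (by positivity)]
  rw [h1, max_eq_left (by have : (0:ℝ) ≤ (k:ℝ) := Nat.cast_nonneg _; linarith), mul_zero]

lemma hfun_node (m : ℕ) (hm : m ≠ 0) (j : Fin m) :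
    hfun m (((j:ℝ) + 1) / (m:ℝ)) = tipt j := by
  have hmR : (m:ℝ) ≠ 0 := Nat.cast_ne_zero.2 hm
  have harg : (m:ℝ) * (((j:ℝ) + 1) / (m:ℝ)) = (j:ℝ) + 1 := by field_simp
  unfold hfun
  rw [Finset.sum_eq_single j]
  · rw [harg]
    simp
  · intro k _ hkj
    rw [harg]
    have h1 : (1:ℝ) ≤ |(j:ℝ) + 1 - ((k:ℝ) + 1)| := by
      have := nat_abs_ge_one (a := (j:ℕ)) (b := (k:ℕ))
        (fun hc => hkj (Fin.ext hc).symm)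
      calc (1:ℝ) ≤ |(j:ℝ) - (k:ℝ)| := this
        _ = _ := by ring_nf
    rw [max_eq_left (by linarith), mul_zero]
  · intro h
    exact absurd (Finset.mem_univ j) h

end HFun

section Loops
variable {X : Type*} [MetricSpace X] {m : ℕ} {x₀ : X} {y₀ : Fin m → X}

/-- the `j`-th coordinate of `φ`, run backwards-and-forwards (tent). -/
def Mf (φ : C(unitInterval, Fin m → X)) (j : Fin m) : ℝ → X :=
  fun t => pcI φ (|2*t - 1|) j

lemma Mf_continuous (φ : C(unitInterval, Fin m → X)) (j : Fin m) : Continuous (Mf φ j) :=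
  (continuous_apply j).comp ((pcI_continuous φ).comp (by fun_prop))

lemma Mf_of_nonpos (φ : C(unitInterval, Fin m → X)) (j : Fin m) {t : ℝ} (ht : t ≤ 0) :
    Mf φ j t = φ 1 j := by
  unfold Mf
  rw [show |2*t - 1| = 1 - 2*t by rw [abs_of_nonpos (by linarith)]; ring,
    pcI_of_one_le φ (by linarith)]

lemma Mf_of_one_le (φ : C(unitInterval, Fin m → X)) (j : Fin m) {t : ℝ} (ht : 1 ≤ t) :
    Mf φ j t = φ 1 j := by
  unfold Mf
  rw [show |2*t - 1| = 2*t - 1 by rw [abs_of_nonneg (by linarith)],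
    pcI_of_one_le φ (by linarith)]

lemma Mf_half (φ : C(unitInterval, Fin m → X)) (j : Fin m) :
    Mf φ j (1/2) = φ 0 j := by
  unfold Mf
  norm_num
  rw [pcI_of_nonpos φ le_rfl]

lemma Mf_dist (φ ψ : C(unitInterval, Fin m → X)) (j : Fin m) (t : ℝ) :
    dist (Mf φ j t) (Mf ψ j t) ≤ dist φ ψ :=
  (dist_le_pi_dist _ _ j).trans (pcI_dist φ ψ _)

/-- the `j`-th loop at `x₀` through `x j`, using a fixed path `β j : x₀ → y₀ j`. -/
def Ltip (β : ∀ j : Fin m, Path x₀ (y₀ j)) (φ : C(unitInterval, Fin m → X)) (j : Fin m) :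
    ℝ → X :=
  gtrans (gtrans (β j).extend (Mf φ j)) (fun t => (β j).extend (1 - t))

lemma Ltip_good (β : ∀ j : Fin m, Path x₀ (y₀ j)) (φ : C(unitInterval, Fin m → X))
    (hφ : φ 1 = y₀) (j : Fin m) : GoodLoop x₀ (Ltip β φ j) := by
  have hMf0 : Mf φ j 0 = y₀ j := by rw [Mf_of_nonpos φ j le_rfl, hφ]
  refine ⟨?_, ?_, ?_⟩
  · apply gtrans_continuous
    · apply gtrans_continuous (β j).continuous_extend (Mf_continuous φ j)
      rw [(β j).extend_of_one_le le_rfl, hMf0]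
    · exact (β j).continuous_extend.comp (by fun_prop)
    · rw [gtrans_clampR (fun t ht => by rw [Mf_of_one_le φ j ht, hφ]) 1 le_rfl]
      norm_num [Path.extend_one]
  · exact gtrans_clampL (gtrans_clampL (fun t ht => (β j).extend_of_le_zero ht))
  · refine gtrans_clampR (fun t ht => ?_)
    rw [(β j).extend_of_le_zero (by linarith)]

lemma Ltip_tip (β : ∀ j : Fin m, Path x₀ (y₀ j)) (φ : C(unitInterval, Fin m → X))
    (j : Fin m) : Ltip β φ j (3/8) = φ 0 j := by
  unfold Ltip
  rw [gtrans_of_le (by norm_num), gtrans_of_not_le (by norm_num)]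
  norm_num [Mf_half]

lemma Ltip_dist (β : ∀ j : Fin m, Path x₀ (y₀ j)) (φ ψ : C(unitInterval, Fin m → X))
    (j : Fin m) (t : ℝ) : dist (Ltip β φ j t) (Ltip β ψ j t) ≤ dist φ ψ := by
  unfold Ltip
  exact gtrans_dist (gtrans_dist (fun u => by simpa using dist_nonneg) (Mf_dist φ ψ j))
    (fun u => by simpa using dist_nonneg) t

end Loops

section Assembled
variable {X : Type*} [MetricSpace X]

/-- The main construction: turn a path in `X^m` ending at `y₀` into a path in `X`
starting at `x₀` and passing through the coordinates at the prescribed times. -/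
def PhiMap (m : ℕ) (x₀ : X) (y₀ : Fin m → X) (β : ∀ j : Fin m, Path x₀ (y₀ j))
    (φh : {φ : C(unitInterval, Fin m → X) // φ 1 = y₀}) : C(unitInterval, X) :=
  { toFun := fun s => btrans x₀ (List.ofFn (fun j => Ltip β φh.1 j)) (hfun m s.1)
    continuous_toFun := by
      have hg := btrans_good (z := x₀) (List.ofFn (fun j => Ltip β φh.1 j))
        (by rw [List.forall_mem_ofFn_iff]; exact fun j => Ltip_good β φh.1 φh.2 j)
      exact hg.1.comp ((hfun_continuous m).comp continuous_subtype_val) }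

lemma PhiMap_start (m : ℕ) (x₀ : X) (y₀ : Fin m → X) (β : ∀ j : Fin m, Path x₀ (y₀ j))
    (φh : {φ : C(unitInterval, Fin m → X) // φ 1 = y₀}) :
    PhiMap m x₀ y₀ β φh 0 = x₀ := by
  have hg := btrans_good (z := x₀) (List.ofFn (fun j => Ltip β φh.1 j))
    (by rw [List.forall_mem_ofFn_iff]; exact fun j => Ltip_good β φh.1 φh.2 j)
  show btrans x₀ _ (hfun m ((0 : unitInterval) : ℝ)) = x₀
  rw [show ((0 : unitInterval) : ℝ) = 0 from rfl, hfun_zero m]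
  exact hg.2.1 0 le_rfl

lemma PhiMap_node (m : ℕ) (hm : m ≠ 0) (x₀ : X) (y₀ : Fin m → X)
    (β : ∀ j : Fin m, Path x₀ (y₀ j))
    (φh : {φ : C(unitInterval, Fin m → X) // φ 1 = y₀}) (j : Fin m) :
    PhiMap m x₀ y₀ β φh (Set.projIcc 0 1 zero_le_one (((j:ℝ) + 1) / (m:ℝ))) = φh.1 0 j := by
  have hmem : ((j:ℝ) + 1) / (m:ℝ) ∈ Set.Icc (0:ℝ) 1 := by
    have hj : ((j:ℝ) + 1) ≤ (m:ℝ) := by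
      have := j.2
      exact_mod_cast Nat.succ_le_of_lt this
    have hm0 : (0:ℝ) < (m:ℝ) := Nat.cast_pos.2 (Nat.pos_of_ne_zero hm)
    constructor
    · positivity
    · rw [div_le_one hm0]; exact hj
  show btrans x₀ _ (hfun m _) = _
  rw [show ((Set.projIcc 0 1 zero_le_one (((j:ℝ) + 1) / (m:ℝ)) : unitInterval) : ℝ)
      = ((j:ℝ) + 1) / (m:ℝ) by rw [Set.projIcc_of_mem _ hmem]]
  rw [hfun_node m hm j]
  have hlen : (j:ℕ) < (List.ofFn (fun j => Ltip β φh.1 j)).length := by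
    rw [List.length_ofFn]; exact j.2
  rw [btrans_tip _ (j:ℕ) hlen, List.get_ofFn]
  have : (Fin.cast List.length_ofFn ⟨(j:ℕ), hlen⟩) = j := by
    apply Fin.ext; rfl
  rw [this, Ltip_tip]

lemma PhiMap_dist (m : ℕ) (x₀ : X) (y₀ : Fin m → X) (β : ∀ j : Fin m, Path x₀ (y₀ j))
    (a b : {φ : C(unitInterval, Fin m → X) // φ 1 = y₀}) :
    dist (PhiMap m x₀ y₀ β a) (PhiMap m x₀ y₀ β b) ≤ dist a b := by
  rw [ContinuousMap.dist_le dist_nonneg]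
  intro s
  show dist (btrans x₀ _ _) (btrans x₀ _ _) ≤ _
  rw [Subtype.dist_eq]
  refine btrans_dist dist_nonneg _ _ (by simp) ?_ _
  intro i hi hi' t
  rw [List.get_ofFn, List.get_ofFn]
  exact Ltip_dist β a.1 b.1 _ t

/-- The reverse construction: turn a path in `X` into a path in `X^m`. -/
def PsiMap (m : ℕ) (ψ : C(unitInterval, X)) : C(unitInterval, Fin m → X) :=
  { toFun := fun t j => pcI ψ ((1 - (t:ℝ)) * (((j:ℝ) + 1) / (m:ℝ)))
    continuous_toFun := by
      apply continuous_pi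
      intro j
      exact (pcI_continuous ψ).comp (by fun_prop) }

lemma PsiMap_zero (m : ℕ) (ψ : C(unitInterval, X)) (j : Fin m) :
    PsiMap m ψ 0 j = ψ (Set.projIcc 0 1 zero_le_one (((j:ℝ) + 1) / (m:ℝ))) := by
  show pcI ψ ((1 - ((0 : unitInterval):ℝ)) * _) = _
  rw [show ((0 : unitInterval) : ℝ) = 0 from rfl]
  rw [sub_zero, one_mul]
  rfl

lemma PsiMap_one (m : ℕ) (ψ : C(unitInterval, X)) (j : Fin m) :
    PsiMap m ψ 1 j = ψ 0 := by
  show pcI ψ ((1 - ((1 : unitInterval):ℝ)) * _) = _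
  rw [show ((1 : unitInterval) : ℝ) = 1 from rfl]
  rw [sub_self, zero_mul]
  exact pcI_of_nonpos ψ le_rfl

lemma PsiMap_dist (m : ℕ) (a b : C(unitInterval, X)) :
    dist (PsiMap m a) (PsiMap m b) ≤ dist a b := by
  rw [ContinuousMap.dist_le dist_nonneg]
  intro t
  rw [dist_pi_le_iff dist_nonneg]
  intro j
  exact pcI_dist a b _

/-- concatenation with a fixed tail path. -/
def tailCat {y₀ x₀ : X} (β : Path y₀ x₀) (φh : {φ : C(unitInterval, X) // φ 1 = y₀}) :
    C(unitInterval, X) :=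
  { toFun := fun s => gtrans (pcI φh.1) β.extend (s:ℝ)
    continuous_toFun := by
      refine (gtrans_continuous (pcI_continuous φh.1) β.continuous_extend ?_).comp
        continuous_subtype_val
      rw [pcI_of_one_le φh.1 le_rfl, φh.2, Path.extend_zero] }

lemma tailCat_zero {y₀ x₀ : X} (β : Path y₀ x₀)
    (φh : {φ : C(unitInterval, X) // φ 1 = y₀}) : tailCat β φh 0 = φh.1 0 := by
  show gtrans (pcI φh.1) β.extend ((0 : unitInterval):ℝ) = _
  rw [show ((0 : unitInterval) : ℝ) = 0 from rfl, gtrans_of_le (by norm_num), mul_zero]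
  exact pcI_of_nonpos φh.1 le_rfl

lemma tailCat_one {y₀ x₀ : X} (β : Path y₀ x₀)
    (φh : {φ : C(unitInterval, X) // φ 1 = y₀}) : tailCat β φh 1 = x₀ := by
  show gtrans (pcI φh.1) β.extend ((1 : unitInterval):ℝ) = _
  rw [show ((1 : unitInterval) : ℝ) = 1 from rfl, gtrans_of_not_le (by norm_num)]
  norm_num [Path.extend_one]

lemma tailCat_dist {y₀ x₀ : X} (β : Path y₀ x₀)
    (a b : {φ : C(unitInterval, X) // φ 1 = y₀}) :
    dist (tailCat β a) (tailCat β b) ≤ dist a b := by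
  rw [ContinuousMap.dist_le dist_nonneg]
  intro s
  rw [Subtype.dist_eq]
  exact gtrans_dist (pcI_dist a.1 b.1) (fun u => by simpa using dist_nonneg) _

end Assembled

section Glue
variable {Z : Type*} [MetricSpace Z]

/-- the underlying (borel) measure of an element of `Bmeas`. -/
def bmeasM {n : ℕ} (μ : Bmeas n Z) : @MeasureTheory.Measure Z (borel Z) :=
  @MeasureTheory.ProbabilityMeasure.toMeasure Z (borel Z) (Bmeas.meas μ)

lemma bmeas_one_iff {n : ℕ} (μ : Bmeas n Z) (s : Set Z) :
    Bmeas.meas μ s = 1 ↔ bmeasM μ s = 1 := by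
  letI : MeasurableSpace Z := borel Z
  haveI : BorelSpace Z := ⟨rfl⟩
  exact pm_apply_eq_one_iff (Bmeas.meas μ) s

lemma meas_inter_one {m0 : MeasurableSpace Z} (μ : MeasureTheory.Measure Z)
    [MeasureTheory.IsProbabilityMeasure μ] {s t : Set Z} (ht : MeasurableSet t)
    (h1 : μ s = 1) (h2 : μ t = 1) : μ (s ∩ t) = 1 := by
  refine le_antisymm MeasureTheory.prob_le_one ?_
  have hdiff : μ (s \ t) = 0 :=
    MeasureTheory.measure_mono_null (Set.diff_subset_compl s t)
      ((MeasureTheory.prob_compl_eq_zero_iff ht).2 h2)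
  calc (1:ℝ≥0∞) = μ s := h1.symm
    _ ≤ μ (s ∩ t) + μ (s \ t) := MeasureTheory.measure_le_inter_add_diff μ s t
    _ = μ (s ∩ t) := by rw [hdiff, add_zero]

/-- extract a single small finset carrying the measure, inside two given supports. -/
lemma bmeas_good_finset {n : ℕ} (μ : Bmeas n Z) (A B : Set Z)
    (hA : DistributedOn μ A) (hB : DistributedOn μ B) :
    ∃ S : Finset Z, S.card ≤ n ∧ (↑S : Set Z) ⊆ A ∩ B ∧ bmeasM μ ↑S = 1 := by
  letI : MeasurableSpace Z := borel Z
  haveI : BorelSpace Z := ⟨rfl⟩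
  classical
  obtain ⟨S₀, hS₀c, hS₀⟩ := μ.2
  obtain ⟨S₁, hS₁A, hS₁⟩ := hA
  obtain ⟨S₂, hS₂B, hS₂⟩ := hB
  have hS₀' : bmeasM μ ↑S₀ = 1 := (bmeas_one_iff μ _).1 hS₀
  have hS₁' : bmeasM μ ↑S₁ = 1 := (bmeas_one_iff μ _).1 hS₁
  have hS₂' : bmeasM μ ↑S₂ = 1 := (bmeas_one_iff μ _).1 hS₂
  haveI : MeasureTheory.IsProbabilityMeasure (bmeasM μ) := (Bmeas.meas μ).2
  refine ⟨S₀ ∩ S₁ ∩ S₂, ?_, ?_, ?_⟩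
  · exact le_trans (Finset.card_le_card (Finset.inter_subset_left.trans
      Finset.inter_subset_left)) hS₀c
  · intro z hz
    rw [Finset.coe_inter, Finset.coe_inter] at hz
    exact ⟨hS₁A hz.1.2, hS₂B hz.2⟩
  · rw [Finset.coe_inter, Finset.coe_inter]
    have hm1 : MeasurableSet (↑S₁ : Set Z) := S₁.finite_toSet.isClosed.measurableSet
    have hm2 : MeasurableSet (↑S₂ : Set Z) := S₂.finite_toSet.isClosed.measurableSet
    exact meas_inter_one _ hm2 (meas_inter_one _ hm1 hS₀' hS₁') hS₂'

/-- uniqueness of the base point of a fiberwise supported measure. -/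
lemma fibProj_eq_of {E B : Type*} [MetricSpace E] {k : ℕ} (p : E → B)
    (μ : FibMeas k p) {b : B} (h : DistributedOn μ.1 (p ⁻¹' {b})) :
    fibProj k p μ = b := by
  letI : MeasurableSpace E := borel E
  haveI : BorelSpace E := ⟨rfl⟩
  have hspec : DistributedOn μ.1 (p ⁻¹' {fibProj k p μ}) := Classical.choose_spec μ.2
  obtain ⟨S, hSsub, hS⟩ := h
  obtain ⟨S', hS'sub, hS'⟩ := hspec
  have hS1 : bmeasM μ.1 ↑S = 1 := (bmeas_one_iff μ.1 _).1 hS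
  have hS'1 : bmeasM μ.1 ↑S' = 1 := (bmeas_one_iff μ.1 _).1 hS'
  haveI : MeasureTheory.IsProbabilityMeasure (bmeasM μ.1) := (Bmeas.meas μ.1).2
  have hone : bmeasM μ.1 (↑S ∩ ↑S') = 1 :=
    meas_inter_one _ (S'.finite_toSet.isClosed.measurableSet) hS1 hS'1
  have hne : ((↑S : Set E) ∩ ↑S').Nonempty := by
    rw [Set.nonempty_iff_ne_empty]
    intro hc
    rw [hc] at hone
    simp at hone
  obtain ⟨z, hz⟩ := hne
  have h1 : p z = b := hSsub hz.1
  have h2 : p z = fibProj k p μ := hS'sub hz.2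
  rw [← h2, h1]

/-- inclusion of `B_k` into `B_n` for `k ≤ n`. -/
def bmeasIncl {k n : ℕ} (h : k ≤ n) (μ : Bmeas k Z) : Bmeas n Z :=
  ⟨μ.1, by obtain ⟨S, hc, hS⟩ := μ.2; exact ⟨S, hc.trans h, hS⟩⟩

lemma bmeasIncl_continuous {k n : ℕ} (h : k ≤ n) :
    Continuous (bmeasIncl (Z := Z) h) := by
  letI : MeasurableSpace Z := borel Z
  haveI : BorelSpace Z := ⟨rfl⟩
  exact Continuous.subtype_mk continuous_subtype_val _

lemma bmeasIncl_distributedOn {k n : ℕ} (h : k ≤ n) (μ : Bmeas k Z) (A : Set Z)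
    (hA : DistributedOn μ A) : DistributedOn (bmeasIncl h μ) A := hA

lemma sInf_le_nat_iff {P : ℕ → Prop} (n : ℕ) :
    sInf {c : ℕ∞ | ∃ k : ℕ, c = (k:ℕ∞) ∧ P k} ≤ (n:ℕ∞) ↔ ∃ k, k ≤ n ∧ P k := by
  constructor
  · intro h
    have hne : {c : ℕ∞ | ∃ k : ℕ, c = (k:ℕ∞) ∧ P k}.Nonempty := by
      by_contra hc
      rw [Set.not_nonempty_iff_eq_empty] at hc
      rw [hc, sInf_empty] at h
      exact absurd (lt_of_le_of_lt h (WithTop.coe_lt_top n)) (lt_irrefl _)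
    obtain ⟨k, hEq, hPk⟩ := csInf_mem hne
    refine ⟨k, ?_, hPk⟩
    rw [hEq] at h
    exact_mod_cast h
  · rintro ⟨k, hk, hPk⟩
    exact le_trans (sInf_le ⟨k, rfl, hPk⟩) (by exact_mod_cast hk)

end Glue

section Conversions
open MeasureTheory

/-- From a distributional contraction of `X^m` to a section of `A_{n+1}(X) → X^m`. -/
lemma conversionA (m : ℕ) (hm : 1 ≤ m) (X : Type) [MetricSpace X] [PathConnectedSpace X]
    (x₀ : X) (n : ℕ) (y₀ : Fin m → X)
    (H : (Fin m → X) → Bmeas (n + 1) (PathSp (Fin m → X)))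
    (hH : IsContr (n + 1) y₀ H) :
    ∃ s : (Fin m → X) → Asub (n + 1) m X x₀,
      Continuous s ∧ ∀ x, fibProj (n + 1) (xiFib m X) (s x).1 = x := by
  classical
  letI : MeasurableSpace (PathSp (Fin m → X)) := borel _
  haveI : BorelSpace (PathSp (Fin m → X)) := ⟨rfl⟩
  letI : MeasurableSpace (PathSp X) := borel _
  haveI : BorelSpace (PathSp X) := ⟨rfl⟩
  obtain ⟨hHc, hHd⟩ := hH
  set A : Set (PathSp (Fin m → X)) := {φ | φ 1 = y₀} with hAdef
  have hA : IsClosed A := isClosed_eq (continuous_eval_const 1) continuous_const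
  set β : ∀ j : Fin m, Path x₀ (y₀ j) := fun j => PathConnectedSpace.somePath x₀ (y₀ j)
    with hβdef
  set f : A → PathSp X := fun φh => PhiMap m x₀ y₀ β ⟨φh.1, φh.2⟩ with hfdef
  have hflip : ∀ a b : A, dist (f a) (f b) ≤ dist a b := by
    intro a b
    calc dist (f a) (f b)
        ≤ dist (⟨a.1, a.2⟩ : {φ : C(unitInterval, Fin m → X) // φ 1 = y₀}) ⟨b.1, b.2⟩ :=
          PhiMap_dist m x₀ y₀ β _ _
      _ = dist a b := by rw [Subtype.dist_eq, Subtype.dist_eq]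
  have hf : Continuous f :=
    (LipschitzWith.of_dist_le_mul (K := 1) (fun a b => by
      rw [NNReal.coe_one, one_mul]; exact hflip a b)).continuous
  have hprob : ∀ x, IsProbabilityMeasure (bmeasM (H x)) := fun x => (Bmeas.meas (H x)).2
  have hAone : ∀ x, (LevyProkhorov.toMeasureEquiv (H x).1 :
      ProbabilityMeasure (PathSp (Fin m → X))).toMeasure A = 1 := by
    intro x
    obtain ⟨S, hsub, hS⟩ := hHd x
    have hS' : bmeasM (H x) ↑S = 1 := (bmeas_one_iff (H x) _).1 hS
    haveI := hprob x
    refine le_antisymm prob_le_one ?_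
    calc (1:ℝ≥0∞) = bmeasM (H x) ↑S := hS'.symm
      _ ≤ _ := measure_mono (fun φ hφ => (hsub hφ).2)
  set s0 : (Fin m → X) → LevyProkhorov (ProbabilityMeasure (PathSp X)) :=
    fun x => lpPushPM hA f hf ⟨(H x).1, hAone x⟩ with hs0def
  -- the pushed-forward good finsets
  have hbun : ∀ x : Fin m → X, ∃ Tf : Finset (PathSp X), Tf.card ≤ n + 1 ∧
      (↑Tf : Set (PathSp X)) ⊆ {ψ : PathSp X | ψ 0 = x₀ ∧ xiFib m X ψ = x} ∧
      (LevyProkhorov.toMeasureEquiv (s0 x) : ProbabilityMeasure (PathSp X)).toMeasure ↑Tf = 1 := by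
    intro x
    obtain ⟨S, hcard, hsub, hS1⟩ := bmeas_good_finset (H x)
      {φ | φ 0 = x ∧ φ 1 = y₀} {φ | φ 0 = x ∧ φ 1 = y₀} (hHd x) (hHd x)
    have hSA : (↑S : Set (PathSp (Fin m → X))) ⊆ A := fun φ hφ => (hsub hφ).1.2
    have hT : ∀ z (hz : z ∈ A), z ∈ S →
        f ⟨z, hz⟩ ∈ {ψ : PathSp X | ψ 0 = x₀ ∧ xiFib m X ψ = x} := by
      intro z hz hzS
      have hzD := (hsub hzS).1
      constructor
      · exact PhiMap_start m x₀ y₀ β ⟨z, hz⟩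
      · funext j
        show PhiMap m x₀ y₀ β ⟨z, hz⟩ (Set.projIcc 0 1 zero_le_one (((j:ℝ) + 1) / (m:ℝ))) = x j
        rw [PhiMap_node m (by omega) x₀ y₀ β ⟨z, hz⟩ j]
        exact congrFun hzD.1 j
    obtain ⟨Tf, hTc, hTsub, hT1⟩ := lpPushPM_distributed hA f hf ⟨(H x).1, hAone x⟩
      hSA hS1 (T := {ψ : PathSp X | ψ 0 = x₀ ∧ xiFib m X ψ = x}) hT
    exact ⟨Tf, hTc.trans hcard, hTsub, hT1⟩
  -- assemble the section
  have cond1 : ∀ x, ∃ Sf : Finset (PathSp X), Sf.card ≤ n + 1 ∧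
      (LevyProkhorov.toMeasureEquiv (s0 x) : ProbabilityMeasure (PathSp X)) (↑Sf : Set (PathSp X)) = 1 := by
    intro x
    obtain ⟨Tf, h1, h2, h3⟩ := hbun x
    exact ⟨Tf, h1, (pm_apply_eq_one_iff _ _).2 h3⟩
  set B1 : (Fin m → X) → Bmeas (n + 1) (PathSp X) := fun x => ⟨s0 x, cond1 x⟩ with hB1def
  have cond2 : ∀ x, ∃ b, DistributedOn (B1 x) (xiFib m X ⁻¹' {b}) := by
    intro x
    obtain ⟨Tf, h1, h2, h3⟩ := hbun x
    exact ⟨x, Tf, fun ψ hψ => (h2 hψ).2, (bmeas_one_iff (B1 x) _).2 h3⟩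
  set B2 : (Fin m → X) → FibMeas (n + 1) (xiFib m X) := fun x => ⟨B1 x, cond2 x⟩ with hB2def
  have cond3 : ∀ x, DistributedOn (B2 x).1 {φ : PathSp X | φ 0 = x₀} := by
    intro x
    obtain ⟨Tf, h1, h2, h3⟩ := hbun x
    exact ⟨Tf, fun ψ hψ => (h2 hψ).1, (bmeas_one_iff (B1 x) _).2 h3⟩
  have hfibd : ∀ x, DistributedOn (B2 x).1 (xiFib m X ⁻¹' {x}) := by
    intro x
    obtain ⟨Tf, h1, h2, h3⟩ := hbun x
    exact ⟨Tf, fun ψ hψ => (h2 hψ).2, (bmeas_one_iff (B1 x) _).2 h3⟩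
  refine ⟨fun x => ⟨B2 x, cond3 x⟩, ?_, ?_⟩
  · apply Continuous.subtype_mk
    apply Continuous.subtype_mk
    apply Continuous.subtype_mk
    exact (lpPushPM_continuous hA f hf hflip).comp
      (Continuous.subtype_mk (continuous_subtype_val.comp hHc) _)
  · intro x
    exact fibProj_eq_of (xiFib m X) (B2 x) (hfibd x)

/-- From a section of `A_{n+1}(X) → X^m` to a distributional contraction of `X^m`. -/
lemma conversionB (m : ℕ) (X : Type) [MetricSpace X]
    (x₀ : X) (n : ℕ) (s : (Fin m → X) → Asub (n + 1) m X x₀) (hsc : Continuous s)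
    (hsp : ∀ x, fibProj (n + 1) (xiFib m X) (s x).1 = x) :
    ∃ H : (Fin m → X) → Bmeas (n + 1) (PathSp (Fin m → X)),
      IsContr (n + 1) (fun _ => x₀) H := by
  classical
  letI : MeasurableSpace (PathSp X) := borel _
  haveI : BorelSpace (PathSp X) := ⟨rfl⟩
  letI : MeasurableSpace (PathSp (Fin m → X)) := borel _
  haveI : BorelSpace (PathSp (Fin m → X)) := ⟨rfl⟩
  set A : Set (PathSp X) := Set.univ with hAdef
  have hA : IsClosed A := isClosed_univ
  set f : A → PathSp (Fin m → X) := fun ψh => PsiMap m ψh.1 with hfdef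
  have hflip : ∀ a b : A, dist (f a) (f b) ≤ dist a b := by
    intro a b
    calc dist (f a) (f b) ≤ dist a.1 b.1 := PsiMap_dist m a.1 b.1
      _ = dist a b := (Subtype.dist_eq a b).symm
  have hf : Continuous f :=
    (LipschitzWith.of_dist_le_mul (K := 1) (fun a b => by
      rw [NNReal.coe_one, one_mul]; exact hflip a b)).continuous
  have hAone : ∀ x, (LevyProkhorov.toMeasureEquiv (s x).1.1.1 :
      ProbabilityMeasure (PathSp X)).toMeasure A = 1 := by
    intro x
    haveI : IsProbabilityMeasure (bmeasM (s x).1.1) := (Bmeas.meas (s x).1.1).2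
    exact measure_univ
  set H0 : (Fin m → X) → LevyProkhorov (ProbabilityMeasure (PathSp (Fin m → X))) :=
    fun x => lpPushPM hA f hf ⟨(s x).1.1.1, hAone x⟩ with hH0def
  have hbun : ∀ x : Fin m → X, ∃ Tf : Finset (PathSp (Fin m → X)), Tf.card ≤ n + 1 ∧
      (↑Tf : Set (PathSp (Fin m → X))) ⊆
        {φ : PathSp (Fin m → X) | φ 0 = x ∧ φ 1 = fun _ => x₀} ∧
      (LevyProkhorov.toMeasureEquiv (H0 x) :
        ProbabilityMeasure (PathSp (Fin m → X))).toMeasure ↑Tf = 1 := by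
    intro x
    have hfib : DistributedOn (s x).1.1
        ((xiFib m X) ⁻¹' {fibProj (n + 1) (xiFib m X) (s x).1}) :=
      Classical.choose_spec (s x).1.2
    rw [hsp x] at hfib
    obtain ⟨S, hcard, hsub, hS1⟩ := bmeas_good_finset (s x).1.1
      {ψ : PathSp X | ψ 0 = x₀} ((xiFib m X) ⁻¹' {x}) (s x).2 hfib
    have hT : ∀ z (hz : z ∈ A), z ∈ S → f ⟨z, hz⟩ ∈
        {φ : PathSp (Fin m → X) | φ 0 = x ∧ φ 1 = fun _ => x₀} := by
      intro z hz hzS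
      have hzD := hsub hzS
      have hxi : xiFib m X z = x := hzD.2
      constructor
      · funext j
        show PsiMap m z 0 j = x j
        rw [PsiMap_zero]
        exact congrFun hxi j
      · funext j
        show PsiMap m z 1 j = x₀
        rw [PsiMap_one]
        exact hzD.1
    obtain ⟨Tf, hTc, hTsub, hT1⟩ := lpPushPM_distributed hA f hf ⟨(s x).1.1.1, hAone x⟩
      (fun _ _ => trivial) hS1
      (T := {φ : PathSp (Fin m → X) | φ 0 = x ∧ φ 1 = fun _ => x₀}) hT
    exact ⟨Tf, hTc.trans hcard, hTsub, hT1⟩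
  have cond1 : ∀ x, ∃ Sf : Finset (PathSp (Fin m → X)), Sf.card ≤ n + 1 ∧
      (LevyProkhorov.toMeasureEquiv (H0 x) : ProbabilityMeasure (PathSp (Fin m → X)))
        (↑Sf : Set (PathSp (Fin m → X))) = 1 := by
    intro x
    obtain ⟨Tf, h1, h2, h3⟩ := hbun x
    exact ⟨Tf, h1, (pm_apply_eq_one_iff _ _).2 h3⟩
  refine ⟨fun x => ⟨H0 x, cond1 x⟩, ?_, ?_⟩
  · apply Continuous.subtype_mk
    exact (lpPushPM_continuous hA f hf hflip).comp
      (Continuous.subtype_mk ((continuous_subtype_val.comp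
        ((continuous_subtype_val : Continuous (Subtype.val : FibMeas (n + 1) (xiFib m X) →
          Bmeas (n + 1) (PathSp X))).comp
          ((continuous_subtype_val : Continuous (Subtype.val : Asub (n + 1) m X x₀ →
            FibMeas (n + 1) (xiFib m X))).comp hsc)))) _)
  · intro x
    obtain ⟨Tf, h1, h2, h3⟩ := hbun x
    exact ⟨Tf, h2, (bmeas_one_iff (⟨H0 x, cond1 x⟩ : Bmeas (n + 1)
      (PathSp (Fin m → X))) _).2 h3⟩

/-- From a distributional contraction of `X` to a section of `p₀`. -/
lemma conversionC (X : Type) [MetricSpace X] [PathConnectedSpace X] (x₀ y₀ : X) (k : ℕ)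
    (H : X → Bmeas (k + 1) (PathSp X)) (hH : IsContr (k + 1) y₀ H) :
    ∃ s : X → FibMeas (k + 1) (pZero X x₀), Continuous s ∧
      ∀ b, fibProj (k + 1) (pZero X x₀) (s b) = b := by
  classical
  letI : MeasurableSpace (PathSp X) := borel _
  haveI : BorelSpace (PathSp X) := ⟨rfl⟩
  letI : MeasurableSpace (Pend X x₀) := borel _
  haveI : BorelSpace (Pend X x₀) := ⟨rfl⟩
  obtain ⟨hHc, hHd⟩ := hH
  set A : Set (PathSp X) := {φ | φ 1 = y₀} with hAdef
  have hA : IsClosed A := isClosed_eq (continuous_eval_const 1) continuous_const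
  set β : Path y₀ x₀ := PathConnectedSpace.somePath y₀ x₀ with hβdef
  set f : A → Pend X x₀ :=
    fun φh => ⟨tailCat β ⟨φh.1, φh.2⟩, tailCat_one β ⟨φh.1, φh.2⟩⟩ with hfdef
  have hflip : ∀ a b : A, dist (f a) (f b) ≤ dist a b := by
    intro a b
    calc dist (f a) (f b)
        = dist (tailCat β ⟨a.1, a.2⟩) (tailCat β ⟨b.1, b.2⟩) := Subtype.dist_eq _ _
      _ ≤ dist (⟨a.1, a.2⟩ : {φ : C(unitInterval, X) // φ 1 = y₀}) ⟨b.1, b.2⟩ :=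
          tailCat_dist β _ _
      _ = dist a b := by rw [Subtype.dist_eq, Subtype.dist_eq]
  have hf : Continuous f :=
    (LipschitzWith.of_dist_le_mul (K := 1) (fun a b => by
      rw [NNReal.coe_one, one_mul]; exact hflip a b)).continuous
  have hAone : ∀ b, (LevyProkhorov.toMeasureEquiv (H b).1 :
      ProbabilityMeasure (PathSp X)).toMeasure A = 1 := by
    intro b
    obtain ⟨S, hsub, hS⟩ := hHd b
    have hS' : bmeasM (H b) ↑S = 1 := (bmeas_one_iff (H b) _).1 hS
    haveI : IsProbabilityMeasure (bmeasM (H b)) := (Bmeas.meas (H b)).2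
    refine le_antisymm prob_le_one ?_
    calc (1:ℝ≥0∞) = bmeasM (H b) ↑S := hS'.symm
      _ ≤ _ := measure_mono (fun φ hφ => (hsub hφ).2)
  set s0 : X → LevyProkhorov (ProbabilityMeasure (Pend X x₀)) :=
    fun b => lpPushPM hA f hf ⟨(H b).1, hAone b⟩ with hs0def
  have hbun : ∀ b : X, ∃ Tf : Finset (Pend X x₀), Tf.card ≤ k + 1 ∧
      (↑Tf : Set (Pend X x₀)) ⊆ (pZero X x₀) ⁻¹' {b} ∧
      (LevyProkhorov.toMeasureEquiv (s0 b) : ProbabilityMeasure (Pend X x₀)).toMeasure ↑Tf = 1 := by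
    intro b
    obtain ⟨S, hcard, hsub, hS1⟩ := bmeas_good_finset (H b)
      {φ | φ 0 = b ∧ φ 1 = y₀} {φ | φ 0 = b ∧ φ 1 = y₀} (hHd b) (hHd b)
    have hSA : (↑S : Set (PathSp X)) ⊆ A := fun φ hφ => (hsub hφ).1.2
    have hT : ∀ z (hz : z ∈ A), z ∈ S → f ⟨z, hz⟩ ∈ (pZero X x₀) ⁻¹' {b} := by
      intro z hz hzS
      have hzD := (hsub hzS).1
      show pZero X x₀ _ = b
      show tailCat β ⟨z, hz⟩ 0 = b
      rw [tailCat_zero]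
      exact hzD.1
    obtain ⟨Tf, hTc, hTsub, hT1⟩ := lpPushPM_distributed hA f hf ⟨(H b).1, hAone b⟩
      hSA hS1 (T := (pZero X x₀) ⁻¹' {b}) hT
    exact ⟨Tf, hTc.trans hcard, hTsub, hT1⟩
  have cond1 : ∀ b, ∃ Sf : Finset (Pend X x₀), Sf.card ≤ k + 1 ∧
      (LevyProkhorov.toMeasureEquiv (s0 b) : ProbabilityMeasure (Pend X x₀))
        (↑Sf : Set (Pend X x₀)) = 1 := by
    intro b
    obtain ⟨Tf, h1, h2, h3⟩ := hbun b
    exact ⟨Tf, h1, (pm_apply_eq_one_iff _ _).2 h3⟩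
  set B1 : X → Bmeas (k + 1) (Pend X x₀) := fun b => ⟨s0 b, cond1 b⟩ with hB1def
  have cond2 : ∀ b, ∃ b', DistributedOn (B1 b) ((pZero X x₀) ⁻¹' {b'}) := by
    intro b
    obtain ⟨Tf, h1, h2, h3⟩ := hbun b
    exact ⟨b, Tf, h2, (bmeas_one_iff (B1 b) _).2 h3⟩
  have hfibd : ∀ b, DistributedOn (B1 b) ((pZero X x₀) ⁻¹' {b}) := by
    intro b
    obtain ⟨Tf, h1, h2, h3⟩ := hbun b
    exact ⟨Tf, h2, (bmeas_one_iff (B1 b) _).2 h3⟩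
  refine ⟨fun b => ⟨B1 b, cond2 b⟩, ?_, ?_⟩
  · apply Continuous.subtype_mk
    apply Continuous.subtype_mk
    exact (lpPushPM_continuous hA f hf hflip).comp
      (Continuous.subtype_mk (continuous_subtype_val.comp hHc) _)
  · intro b
    exact fibProj_eq_of (pZero X x₀) ⟨B1 b, cond2 b⟩ (hfibd b)

/-- From a section of `p₀` to a distributional contraction of `X`. -/
lemma conversionD (X : Type) [MetricSpace X] (x₀ : X) (k : ℕ)
    (s : X → FibMeas (k + 1) (pZero X x₀)) (hsc : Continuous s)
    (hsp : ∀ b, fibProj (k + 1) (pZero X x₀) (s b) = b) :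
    ∃ H : X → Bmeas (k + 1) (PathSp X), IsContr (k + 1) x₀ H := by
  classical
  letI : MeasurableSpace (Pend X x₀) := borel _
  haveI : BorelSpace (Pend X x₀) := ⟨rfl⟩
  letI : MeasurableSpace (PathSp X) := borel _
  haveI : BorelSpace (PathSp X) := ⟨rfl⟩
  set A : Set (Pend X x₀) := Set.univ with hAdef
  have hA : IsClosed A := isClosed_univ
  set f : A → PathSp X := fun ψh => ψh.1.1 with hfdef
  have hflip : ∀ a b : A, dist (f a) (f b) ≤ dist a b := by
    intro a b
    have heq : dist (f a) (f b) = dist a b := by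
      rw [Subtype.dist_eq a b]; rfl
    exact heq.le
  have hf : Continuous f := continuous_subtype_val.comp continuous_subtype_val
  have hAone : ∀ b, (LevyProkhorov.toMeasureEquiv (s b).1.1 :
      ProbabilityMeasure (Pend X x₀)).toMeasure A = 1 := by
    intro b
    haveI : IsProbabilityMeasure (bmeasM (s b).1) := (Bmeas.meas (s b).1).2
    exact measure_univ
  set H0 : X → LevyProkhorov (ProbabilityMeasure (PathSp X)) :=
    fun b => lpPushPM hA f hf ⟨(s b).1.1, hAone b⟩ with hH0def
  have hbun : ∀ b : X, ∃ Tf : Finset (PathSp X), Tf.card ≤ k + 1 ∧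
      (↑Tf : Set (PathSp X)) ⊆ {φ : PathSp X | φ 0 = b ∧ φ 1 = x₀} ∧
      (LevyProkhorov.toMeasureEquiv (H0 b) : ProbabilityMeasure (PathSp X)).toMeasure ↑Tf = 1 := by
    intro b
    have hfib : DistributedOn (s b).1
        ((pZero X x₀) ⁻¹' {fibProj (k + 1) (pZero X x₀) (s b)}) :=
      Classical.choose_spec (s b).2
    rw [hsp b] at hfib
    obtain ⟨S, hcard, hsub, hS1⟩ := bmeas_good_finset (s b).1
      ((pZero X x₀) ⁻¹' {b}) ((pZero X x₀) ⁻¹' {b}) hfib hfib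
    have hT : ∀ z (hz : z ∈ A), z ∈ S →
        f ⟨z, hz⟩ ∈ {φ : PathSp X | φ 0 = b ∧ φ 1 = x₀} := by
      intro z hz hzS
      exact ⟨(hsub hzS).1, z.2⟩
    obtain ⟨Tf, hTc, hTsub, hT1⟩ := lpPushPM_distributed hA f hf ⟨(s b).1.1, hAone b⟩
      (fun _ _ => trivial) hS1 (T := {φ : PathSp X | φ 0 = b ∧ φ 1 = x₀}) hT
    exact ⟨Tf, hTc.trans hcard, hTsub, hT1⟩
  have cond1 : ∀ b, ∃ Sf : Finset (PathSp X), Sf.card ≤ k + 1 ∧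
      (LevyProkhorov.toMeasureEquiv (H0 b) : ProbabilityMeasure (PathSp X))
        (↑Sf : Set (PathSp X)) = 1 := by
    intro b
    obtain ⟨Tf, h1, h2, h3⟩ := hbun b
    exact ⟨Tf, h1, (pm_apply_eq_one_iff _ _).2 h3⟩
  refine ⟨fun b => ⟨H0 b, cond1 b⟩, ?_, ?_⟩
  · apply Continuous.subtype_mk
    exact (lpPushPM_continuous hA f hf hflip).comp
      (Continuous.subtype_mk ((continuous_subtype_val.comp
        ((continuous_subtype_val : Continuous (Subtype.val : FibMeas (k + 1) (pZero X x₀) →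
          Bmeas (k + 1) (Pend X x₀))).comp hsc))) _)
  · intro b
    obtain ⟨Tf, h1, h2, h3⟩ := hbun b
    exact ⟨Tf, h2, (bmeas_one_iff (⟨H0 b, cond1 b⟩ : Bmeas (k + 1) (PathSp X)) _).2 h3⟩

end Conversions

end Aux

/-- Characterization of `dcat(X^m)`: `dcat(X^m) ≤ n` iff the restriction
`C_{n+1}(ξ_m) : A_{n+1}(X) → X^m` admits a continuous section; and
`dcat(X) = dsecat(p_0)`. -/
theorem dcat_pow_characterization (m : ℕ) (hm : 1 ≤ m) (X : Type) [MetricSpace X]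
    [PathConnectedSpace X] (x₀ : X) :
    (∀ n : ℕ,
      dcat (Fin m → X) ≤ (n : ℕ∞) ↔
        ∃ s : (Fin m → X) → Asub (n + 1) m X x₀,
          Continuous s ∧ ∀ x, fibProj (n + 1) (xiFib m X) (s x).1 = x) ∧
    dcat X = dsecat (pZero X x₀) := by
  constructor
  · intro n
    constructor
    · intro h
      unfold dcat at h
      obtain ⟨k, hk, y₀, H₀, hH₀⟩ := (sInf_le_nat_iff n).1 h
      have hH : IsContr (n + 1) y₀ (fun y => bmeasIncl (Nat.succ_le_succ hk) (H₀ y)) :=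
        ⟨(bmeasIncl_continuous _).comp hH₀.1, fun y => hH₀.2 y⟩
      exact conversionA m hm X x₀ n y₀ _ hH
    · rintro ⟨s, hsc, hsp⟩
      obtain ⟨H, hH⟩ := conversionB m X x₀ n s hsc hsp
      unfold dcat
      exact (sInf_le_nat_iff n).2 ⟨n, le_rfl, fun _ => x₀, H, hH⟩
  · apply le_antisymm
    · refine sInf_le_sInf_of_isCoinitialFor ?_
      rintro c ⟨k, rfl, sec, hc, hp⟩
      obtain ⟨H, hH⟩ := conversionD X x₀ k sec hc hp
      exact ⟨(k : ℕ∞), ⟨k, rfl, x₀, H, hH⟩, le_rfl⟩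
    · refine sInf_le_sInf_of_isCoinitialFor ?_
      rintro c ⟨k, rfl, y₀, H, hH⟩
      obtain ⟨sec, hc, hp⟩ := conversionC X x₀ y₀ k H hH
      exact ⟨(k : ℕ∞), ⟨k, rfl, sec, hc, hp⟩, le_rfl⟩
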